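/- If G(f) has no negative cycle, then every attractor of the asynchronous graph Γ(f) is a singleton, i.e. a fixed point of f; in particular Γ(f) has no cyclic attractor. -/

import Mathlib

/-- State of a Boolean network with `n` components. -/
abbrev BState (n : ℕ) := Fin n → Bool

/-- Positive arc `j → i` in the global interaction graph `G(f)`:
the discrete partial derivative `f_{ij}` is positive at some state. -/
def posArc {n : ℕ} (f : BState n → BState n) (j i : Fin n) : Prop :=
  ∃ x : BState n, f (Function.update x j true) i = true ∧
    f (Function.update x j false) i = false

/-- Negative arc `j → i` in `G(f)`:
the discrete partial derivative `f_{ij}` is negative at some state. -/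
def negArc {n : ℕ} (f : BState n → BState n) (j i : Fin n) : Prop :=
  ∃ x : BState n, f (Function.update x j true) i = false ∧
    f (Function.update x j false) i = true

/-- Unsigned arc `j → i` in the interaction graph: `f_i` depends on `x_j`. -/
def arc {n : ℕ} (f : BState n → BState n) (j i : Fin n) : Prop :=
  posArc f j i ∨ negArc f j i

/-- Arc of given sign (`true` = positive, `false` = negative). -/
def signedArc {n : ℕ} (f : BState n → BState n) (ε : Bool) (j i : Fin n) : Prop :=
  if ε then posArc f j i else negArc f j i

/-- A signed cycle of `G(f)`: vertices `vert 0 → vert 1 → ⋯ → vert len → vert 0`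
(so the length is `len + 1`), pairwise distinct, each consecutive arc present in
`G(f)` with sign `sign k`. -/
structure SignedCycle {n : ℕ} (f : BState n → BState n) where
  len : ℕ
  vert : Fin (len + 1) → Fin n
  inj : Function.Injective vert
  sign : Fin (len + 1) → Bool
  arcs : ∀ k : Fin (len + 1), signedArc f (sign k) (vert k) (vert (k + 1))

/-- Length (number of arcs) of a signed cycle. -/
def SignedCycle.length {n : ℕ} {f : BState n → BState n} (C : SignedCycle f) : ℕ :=
  C.len + 1

/-- A cycle is positive iff it has an even number of negative arcs. -/
def SignedCycle.Positive {n : ℕ} {f : BState n → BState n} (C : SignedCycle f) : Prop :=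
  Even (Finset.univ.filter (fun k => C.sign k = false)).card

/-- A cycle is negative iff it has an odd number of negative arcs. -/
def SignedCycle.Negative {n : ℕ} {f : BState n → BState n} (C : SignedCycle f) : Prop :=
  Odd (Finset.univ.filter (fun k => C.sign k = false)).card

/-- An unsigned cycle of the interaction graph. -/
structure UCycle {n : ℕ} (f : BState n → BState n) where
  len : ℕ
  vert : Fin (len + 1) → Fin n
  inj : Function.Injective vert
  arcs : ∀ k : Fin (len + 1), arc f (vert k) (vert (k + 1))

/-- One step of the asynchronous dynamics `Γ(f)`. -/
def asyncStep {n : ℕ} (f : BState n → BState n) (x y : BState n) : Prop :=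
  ∃ i : Fin n, f x i ≠ x i ∧ y = Function.update x i (f x i)

/-- There is a path of length `L` from `x` to `y` in `Γ(f)`. -/
def asyncPath {n : ℕ} (f : BState n → BState n) (x y : BState n) (L : ℕ) : Prop :=
  ∃ p : ℕ → BState n, p 0 = x ∧ p L = y ∧ ∀ k < L, asyncStep f (p k) (p (k + 1))

/-- `X` is closed under the asynchronous dynamics. -/
def closedSet {n : ℕ} (f : BState n → BState n) (X : Finset (BState n)) : Prop :=
  ∀ x ∈ X, ∀ y, asyncStep f x y → y ∈ X

/-- An attractor of `Γ(f)`: a minimal nonempty closed set of states. -/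
def IsAttractor {n : ℕ} (f : BState n → BState n) (X : Finset (BState n)) : Prop :=
  X.Nonempty ∧ closedSet f X ∧
    ∀ Y ⊆ X, Y.Nonempty → closedSet f Y → Y = X

lemma cwe {n : ℕ} (f : BState n → BState n) (h : ∀ C : SignedCycle f, ¬ C.Negative) :
    ∀ m : ℕ, ∀ v : ℕ → Fin n, ∀ ε : ℕ → Bool,
      (∀ k < m, signedArc f (ε k) (v k) (v (k+1))) → v m = v 0 →
      Even (∑ k ∈ Finset.range m, if ε k = false then 1 else 0) := by
  intro m
  induction m using Nat.strong_induction_on with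
  | _ m IH =>
  intro v ε harc hcl
  rcases Nat.eq_zero_or_pos m with rfl | hm
  · simp
  by_cases hinj : ∀ a < m, ∀ b < m, v a = v b → a = b
  · -- the walk is a cycle
    obtain ⟨len, rfl⟩ : ∃ len, m = len + 1 := ⟨m - 1, (Nat.succ_pred_eq_of_pos hm).symm⟩
    have hinj' : Function.Injective (fun k : Fin (len+1) => v k.val) := by
      intro k₁ k₂ hk
      exact Fin.ext (hinj _ k₁.isLt _ k₂.isLt hk)
    have harcs' : ∀ k : Fin (len+1),
        signedArc f (ε k.val) (v k.val) (v ((k + 1 : Fin (len+1))).val) := by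
      intro k
      rcases eq_or_ne k (Fin.last len) with rfl | hk
      · have h0 : ((Fin.last len + 1 : Fin (len+1))).val = 0 := by
          simp [Fin.val_add_one]
        rw [h0, ← hcl]
        exact harc len (by omega)
      · have h1 : ((k + 1 : Fin (len+1))).val = k.val + 1 := by
          rw [Fin.val_add_one]; simp [hk]
        rw [h1]
        exact harc k.val k.isLt
    have hC := h ⟨len, fun k => v k.val, hinj', fun k => ε k.val, harcs'⟩
    simp only [SignedCycle.Negative] at hC
    have hcount : (Finset.univ.filter fun k : Fin (len+1) => ε k.val = false).card
        = ∑ k ∈ Finset.range (len+1), if ε k = false then 1 else 0 := by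
      rw [Finset.card_filter, ← Fin.sum_univ_eq_sum_range (fun k => if ε k = false then 1 else 0)]
    rw [← hcount]
    exact Nat.not_odd_iff_even.mp (by simpa using hC)
  · -- there is a repeated vertex: split the walk
    push_neg at hinj
    obtain ⟨a, ha, b, hb, hvab, hne⟩ := hinj
    have key : ∀ a b : ℕ, a < b → b < m → v a = v b →
        Even (∑ k ∈ Finset.range m, if ε k = false then 1 else 0) := by
      clear hvab hne ha hb
      intro a b hab hbm hvab
      set d := b - a with hd
      have hdb : a + d = b := by omega
      have E1 : Even (∑ k ∈ Finset.range d, if ε (a + k) = false then 1 else 0) := by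
        refine IH d (by omega) (fun k => v (a + k)) (fun k => ε (a + k)) ?_ ?_
        · intro k hk
          exact harc (a + k) (by omega)
        · show v (a + d) = v (a + 0)
          rw [hdb, Nat.add_zero]; exact hvab.symm
      set m₂ := m - d with hm₂
      set v₂ : ℕ → Fin n := fun k => if k < a then v k else v (k + d) with hv₂
      set ε₂ : ℕ → Bool := fun k => if k < a then ε k else ε (k + d) with hε₂
      have E2 : Even (∑ k ∈ Finset.range m₂, if ε₂ k = false then 1 else 0) := by
        refine IH m₂ (by omega) v₂ ε₂ ?_ ?_
        · intro k hk
          by_cases hka : k < a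
          · have e1 : v₂ k = v k := if_pos hka
            have e2 : ε₂ k = ε k := if_pos hka
            have e3 : v₂ (k+1) = v (k+1) := by
              by_cases h' : k + 1 < a
              · exact if_pos h'
              · have hk1 : k + 1 = a := by omega
                show (if k + 1 < a then v (k+1) else v (k+1+d)) = v (k+1)
                rw [if_neg h', hk1, hdb, ← hvab]
            rw [e1, e2, e3]
            exact harc k (by omega)
          · have e1 : v₂ k = v (k + d) := if_neg hka
            have e2 : ε₂ k = ε (k + d) := if_neg hka
            have e3 : v₂ (k+1) = v (k + d + 1) := by
              have h' : ¬ (k + 1 < a) := by omega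
              show (if k + 1 < a then v (k+1) else v (k+1+d)) = v (k+d+1)
              rw [if_neg h']; congr 1; omega
            rw [e1, e2, e3]
            exact harc (k + d) (by omega)
        · have h1 : ¬ (m₂ < a) := by omega
          have h2 : v₂ m₂ = v 0 := by
            show (if m₂ < a then v m₂ else v (m₂ + d)) = v 0
            rw [if_neg h1]
            have : m₂ + d = m := by omega
            rw [this, hcl]
          have h3 : v₂ 0 = v 0 := by
            by_cases h0 : 0 < a
            · exact if_pos h0
            · have ha0 : a = 0 := by omega
              show (if 0 < a then v 0 else v (0 + d)) = v 0
              rw [if_neg h0]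
              have : 0 + d = b := by omega
              rw [this, ← hvab, ha0]
          rw [h2, h3]
      -- combine the two parities
      have hsplit : (∑ k ∈ Finset.range m, if ε k = false then 1 else 0)
          = (∑ k ∈ Finset.range m₂, if ε₂ k = false then 1 else 0)
            + (∑ k ∈ Finset.range d, if ε (a + k) = false then 1 else 0) := by
        have hr : Finset.range m = Finset.Ico 0 m := Finset.range_eq_Ico m
        have hr2 : Finset.range m₂ = Finset.Ico 0 m₂ := Finset.range_eq_Ico m₂
        rw [hr, hr2]
        have c1 : (∑ k ∈ Finset.Ico 0 a, if ε k = false then 1 else 0)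
            + (∑ k ∈ Finset.Ico a b, if ε k = false then 1 else 0)
            = ∑ k ∈ Finset.Ico 0 b, if ε k = false then 1 else 0 :=
          Finset.sum_Ico_consecutive _ (by omega) (by omega)
        have c2 : (∑ k ∈ Finset.Ico 0 b, if ε k = false then 1 else 0)
            + (∑ k ∈ Finset.Ico b m, if ε k = false then 1 else 0)
            = ∑ k ∈ Finset.Ico 0 m, if ε k = false then 1 else 0 :=
          Finset.sum_Ico_consecutive _ (by omega) (by omega)
        have c3 : (∑ k ∈ Finset.Ico 0 a, if ε₂ k = false then 1 else 0)
            + (∑ k ∈ Finset.Ico a m₂, if ε₂ k = false then 1 else 0)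
            = ∑ k ∈ Finset.Ico 0 m₂, if ε₂ k = false then 1 else 0 :=
          Finset.sum_Ico_consecutive _ (by omega) (by omega)
        have d1 : (∑ k ∈ Finset.Ico 0 a, if ε₂ k = false then 1 else 0)
            = ∑ k ∈ Finset.Ico 0 a, if ε k = false then 1 else 0 := by
          refine Finset.sum_congr rfl ?_
          intro k hk
          have : k < a := (Finset.mem_Ico.mp hk).2
          simp [hε₂, this]
        have d2 : (∑ k ∈ Finset.Ico a m₂, if ε₂ k = false then 1 else 0)
            = ∑ k ∈ Finset.Ico b m, if ε k = false then 1 else 0 := by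
          rw [Finset.sum_Ico_eq_sum_range, Finset.sum_Ico_eq_sum_range]
          have hmm : m₂ - a = m - b := by omega
          rw [hmm]
          refine Finset.sum_congr rfl ?_
          intro k hk
          have h' : ¬ (a + k < a) := by omega
          have : a + k + d = b + k := by omega
          simp only [hε₂, if_neg h', this]
        have d3 : (∑ k ∈ Finset.Ico a b, if ε k = false then 1 else 0)
            = ∑ k ∈ Finset.range d, if ε (a + k) = false then 1 else 0 := by
          rw [Finset.sum_Ico_eq_sum_range]
        omega
      rw [hsplit]
      exact E2.add E1
    rcases hne.lt_or_gt with hab | hab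
    · exact key a b hab hb hvab
    · exact key b a hab ha hvab.symm

def rSgn {n : ℕ} (f : BState n → BState n) (W : BState n → Prop) (s : Bool) (j i : Fin n) : Prop :=
  ∃ x, W x ∧ f (Function.update x j true) i = s ∧ f (Function.update x j false) i = !s

lemma rSgn_signedArc {n : ℕ} {f : BState n → BState n} {W : BState n → Prop} {s : Bool}
    {j i : Fin n} (h : rSgn f W s j i) : signedArc f s j i := by
  obtain ⟨x, -, h1, h2⟩ := h
  cases s
  · exact show negArc f j i from ⟨x, h1, h2⟩
  · exact show posArc f j i from ⟨x, h1, h2⟩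

inductive PW {n : ℕ} (f : BState n → BState n) (W : BState n → Prop) (T : Fin n → Prop) :
    Fin n → Fin n → Bool → Prop
  | refl (a) : PW f W T a a false
  | tail {a b c p s} : PW f W T a b p → T b → rSgn f W s b c → PW f W T a c (p ^^ !s)

lemma pw_trans {n : ℕ} {f : BState n → BState n} {W : BState n → Prop} {T : Fin n → Prop}
    {a b c : Fin n} {p q : Bool} (h1 : PW f W T a b p) (h2 : PW f W T b c q) :
    PW f W T a c (p ^^ q) := by
  induction h2 with
  | refl => simpa using h1
  | tail hab hT hs ih =>
    rw [← Bool.xor_assoc]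
    exact PW.tail ih hT hs

lemma pw_walk {n : ℕ} {f : BState n → BState n} {W : BState n → Prop} {T : Fin n → Prop}
    {a b : Fin n} {p : Bool} (hp : PW f W T a b p) :
    ∃ (m : ℕ) (v : ℕ → Fin n) (ε : ℕ → Bool), v 0 = a ∧ v m = b ∧ (∀ k < m, signedArc f (ε k) (v k) (v (k+1))) ∧
      (p = true ↔ Odd (∑ k ∈ Finset.range m, if ε k = false then 1 else 0)) := by
  induction hp with
  | refl => exact ⟨0, fun _ => a, fun _ => true, rfl, rfl, by omega, by simp⟩
  | @tail b c p s hab hT hs ih =>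
    obtain ⟨m, v, ε, h0, hm, harc, hpar⟩ := ih
    refine ⟨m + 1, fun k => if k ≤ m then v k else c, fun k => if k < m then ε k else s,
      ?_, ?_, ?_, ?_⟩
    · simpa using h0
    · simp
    · intro k hk
      show signedArc f (if k < m then ε k else s) (if k ≤ m then v k else c)
        (if k + 1 ≤ m then v (k+1) else c)
      by_cases hkm : k < m
      · rw [if_pos (by omega : k ≤ m), if_pos (by omega : k + 1 ≤ m), if_pos hkm]
        exact harc k hkm
      · have hk' : k = m := by omega
        subst hk'
        rw [if_pos le_rfl, if_neg (by omega : ¬ k + 1 ≤ k), if_neg (by omega : ¬ k < k), hm]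
        exact rSgn_signedArc hs
    · have hsum : (∑ k ∈ Finset.range (m+1), if (if k < m then ε k else s) = false then 1 else 0)
          = (∑ k ∈ Finset.range m, if ε k = false then 1 else 0)
            + (if s = false then 1 else 0) := by
        rw [Finset.sum_range_succ]
        have hB : (∑ k ∈ Finset.range m, if (if k < m then ε k else s) = false then 1 else 0)
            = ∑ k ∈ Finset.range m, if ε k = false then 1 else 0 :=
          Finset.sum_congr rfl (fun k hk => by rw [if_pos (Finset.mem_range.mp hk)])
        rw [hB, if_neg (lt_irrefl m)]
      rw [hsum, Nat.odd_iff]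
      rw [Nat.odd_iff] at hpar
      cases s <;> cases p <;> simp_all <;> omega

lemma pw_closed {n : ℕ} {f : BState n → BState n} (h : ∀ C : SignedCycle f, ¬ C.Negative)
    {W : BState n → Prop} {T : Fin n → Prop} {a : Fin n} {p : Bool}
    (hp : PW f W T a a p) : p = false := by
  obtain ⟨m, v, ε, h0, hm, harc, hpar⟩ := pw_walk hp
  have heven := cwe f h m v ε harc (by rw [hm, h0])
  cases p
  · rfl
  · exact absurd (hpar.mp rfl) (Nat.not_odd_iff_even.mpr heven)


lemma bnot_of_ne {a b : Bool} (h : a ≠ b) : a = !b := by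
  cases a <;> cases b <;> simp_all

lemma bxor_eq_true {a b : Bool} : (a ^^ b) = true ↔ a = !b := by
  cases a <;> cases b <;> simp

lemma bxor_eq_false {a b : Bool} : (a ^^ b) = false ↔ a = b := by
  cases a <;> cases b <;> simp

theorem stmt14 {n : ℕ} (f : BState n → BState n)
    (h : ∀ C : SignedCycle f, ¬ C.Negative) :
    ∀ X : Finset (BState n), IsAttractor f X → ∃ x, X = {x} ∧ f x = x := by
  classical
  intro X hX
  obtain ⟨hne, hcl, hmin⟩ := hX
  obtain ⟨x₀, hx₀⟩ := hne
  by_cases hall : ∀ i : Fin n, ∀ x ∈ X, ∀ y ∈ X, x i = y i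
  · refine ⟨x₀, ?_, ?_⟩
    · exact Finset.eq_singleton_iff_unique_mem.mpr
        ⟨hx₀, fun y hy => funext fun i => hall i y hy x₀ hx₀⟩
    · funext i
      by_contra hib
      have hmem := hcl x₀ hx₀ _ ⟨i, hib, rfl⟩
      have := hall i _ hmem x₀ hx₀
      rw [Function.update_self] at this
      exact hib this
  · exfalso
    push_neg at hall
    set W : BState n → Prop := fun x => x ∈ X with hW
    set T : Fin n → Prop := fun i => ∃ u ∈ X, ∃ w ∈ X, u i ≠ w i with hT
    set Arc : Fin n → Fin n → Prop := fun j i => T j ∧ ∃ s, rSgn f W s j i with hArc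
    set Star : Fin n → Fin n → Prop := fun j i => Relation.ReflTransGen Arc j i with hStar
    -- basic facts
    have fact_step : ∀ x ∈ X, ∀ k, f x k ≠ x k → Function.update x k (f x k) ∈ X :=
      fun x hx k hk => hcl x hx _ ⟨k, hk, rfl⟩
    have fact_T : ∀ x ∈ X, ∀ k, f x k ≠ x k → T k := by
      intro x hx k hk
      refine ⟨Function.update x k (f x k), fact_step x hx k hk, x, hx, ?_⟩
      rw [Function.update_self]; exact hk
    -- choice of i₀
    set TF : Finset (Fin n) := Finset.univ.filter T with hTF
    have hTne : TF.Nonempty := by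
      obtain ⟨i, x, hx, y, hy, hxy⟩ := hall
      exact ⟨i, Finset.mem_filter.mpr ⟨Finset.mem_univ i, x, hx, y, hy, hxy⟩⟩
    set AncF : Fin n → Finset (Fin n) := fun i => Finset.univ.filter (fun j => Star j i)
      with hAncF
    obtain ⟨i₀, hi₀TF, hi₀min⟩ := Finset.exists_min_image TF (fun i => (AncF i).card) hTne
    have hi₀T : T i₀ := (Finset.mem_filter.mp hi₀TF).2
    set S : Fin n → Prop := fun j => Star j i₀ with hS
    have hST : ∀ j, S j → T j := by
      intro j hj
      rcases Relation.ReflTransGen.cases_head hj with rfl | ⟨c, ⟨hTj, _⟩, _⟩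
      · exact hi₀T
      · exact hTj
    have hback : ∀ j, S j → Star i₀ j := by
      intro j hj
      have hsub : AncF j ⊆ AncF i₀ := by
        intro k hk
        exact Finset.mem_filter.mpr ⟨Finset.mem_univ k,
          Relation.ReflTransGen.trans (Finset.mem_filter.mp hk).2 hj⟩
      have hjTF : j ∈ TF := Finset.mem_filter.mpr ⟨Finset.mem_univ j, hST j hj⟩
      have heq := Finset.eq_of_subset_of_card_le hsub (hi₀min j hjTF)
      have : i₀ ∈ AncF j := by
        rw [heq]
        exact Finset.mem_filter.mpr ⟨Finset.mem_univ i₀, Relation.ReflTransGen.refl⟩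
      exact (Finset.mem_filter.mp this).2
    have star_pw : ∀ j i, Star j i → ∃ p, PW f W T j i p := by
      intro j i hji
      induction hji with
      | refl => exact ⟨false, PW.refl j⟩
      | tail hab hbc ih =>
        obtain ⟨p, hp⟩ := ih
        obtain ⟨hTb, s, hs⟩ := hbc
        exact ⟨_, hp.tail hTb hs⟩
    have hpw_uniq : ∀ j, S j → ∀ p q, PW f W T j i₀ p → PW f W T j i₀ q → p = q := by
      intro j hj p q hp hq
      obtain ⟨r, hr⟩ := star_pw _ _ (hback j hj)
      have h1 := pw_closed h (pw_trans hr hp)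
      have h2 := pw_closed h (pw_trans hr hq)
      revert h1 h2
      cases r <;> cases p <;> cases q <;> decide
    have hexσ : ∀ j, ∃ p : Bool, S j → PW f W T j i₀ p := by
      intro j
      by_cases hj : S j
      · obtain ⟨p, hp⟩ := star_pw j i₀ hj
        exact ⟨p, fun _ => hp⟩
      · exact ⟨false, fun hc => absurd hc hj⟩
    choose σ hσ using hexσ
    -- sign consistency
    have hsc : ∀ j i, S j → S i → ∀ s, rSgn f W s j i → σ i = ((!s) ^^ σ j) := by
      intro j i hj hi s hs
      have h1 : PW f W T j i ((false : Bool) ^^ !s) := PW.tail (PW.refl j) (hST j hj) hs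
      have h2 : PW f W T j i₀ (((false : Bool) ^^ !s) ^^ σ i) := pw_trans h1 (hσ i hi)
      have huniq := hpw_uniq j hj _ _ (hσ j hj) h2
      rw [huniq]
      cases s <;> cases h' : σ i <;> decide
    -- single flip monotonicity
    have hflip : ∀ j i, S j → S i → ∀ x ∈ X,
        ((f (Function.update x j (σ j)) i) ^^ σ i) = true →
        ((f (Function.update x j (!(σ j))) i) ^^ σ i) = true := by
      intro j i hj hi x hx h1
      by_contra h2
      have h2' : f (Function.update x j (!(σ j))) i = σ i := by
        have : (f (Function.update x j (!(σ j))) i ^^ σ i) = false := by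
          cases hv : (f (Function.update x j (!(σ j))) i ^^ σ i)
          · rfl
          · exact absurd hv h2
        exact bxor_eq_false.mp this
      have h1' : f (Function.update x j (σ j)) i = !(σ i) := bxor_eq_true.mp h1
      cases hσj : σ j <;> rw [hσj] at h1' h2' <;> cases hσi : σ i <;> rw [hσi] at h1' h2'
      · -- σ j = false, σ i = false : f(up false) = true, f(up true) = false : negArc
        have hs : rSgn f W false j i :=
          ⟨x, hx, by rw [Bool.not_false] at h2'; exact h2', by rw [Bool.not_false]; exact h1'⟩
        have hcontra := hsc j i hj hi false hs
        rw [hσj, hσi] at hcontra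
        exact absurd hcontra (by decide)
      · -- σ j = false, σ i = true : f(up false) = false, f(up true) = true : posArc
        have hs : rSgn f W true j i :=
          ⟨x, hx, by rw [Bool.not_false] at h2'; exact h2', by rw [Bool.not_true]; exact h1'⟩
        have hcontra := hsc j i hj hi true hs
        rw [hσj, hσi] at hcontra
        exact absurd hcontra (by decide)
      · -- σ j = true, σ i = false : f(up true) = true, f(up false) = false : posArc
        have hs : rSgn f W true j i :=
          ⟨x, hx, by rw [Bool.not_false] at h1'; exact h1', by rw [Bool.not_true]; exact h2'⟩
        have hcontra := hsc j i hj hi true hs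
        rw [hσj, hσi] at hcontra
        exact absurd hcontra (by decide)
      · -- σ j = true, σ i = true : f(up true) = false, f(up false) = true : negArc
        have hs : rSgn f W false j i :=
          ⟨x, hx, by rw [Bool.not_true] at h1'; exact h1', by rw [Bool.not_false]; exact h2'⟩
        have hcontra := hsc j i hj hi false hs
        rw [hσj, hσi] at hcontra
        exact absurd hcontra (by decide)
    -- weight and phases
    set SF : Finset (Fin n) := Finset.univ.filter S with hSF
    set Wgt : BState n → ℕ := fun x => (SF.filter (fun i => (x i ^^ σ i) = true)).card with hWgt
    have phase1 : ∀ k : ℕ, ∀ x ∈ X, SF.card - Wgt x ≤ k →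
        ∃ y ∈ X, ∀ i ∈ SF, f y i ≠ y i → (y i ^^ σ i) = true := by
      intro k
      induction k with
      | zero =>
        intro x hx hle
        have hWx : Wgt x = (SF.filter (fun i => (x i ^^ σ i) = true)).card := rfl
        have hfull : SF.filter (fun i => (x i ^^ σ i) = true) = SF :=
          Finset.eq_of_subset_of_card_le (Finset.filter_subset _ _) (by omega)
        refine ⟨x, hx, fun i hi _ => ?_⟩
        have : i ∈ SF.filter (fun i => (x i ^^ σ i) = true) := by rw [hfull]; exact hi
        exact (Finset.mem_filter.mp this).2
      | succ k IH =>
        intro x hx hle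
        by_cases hdone : ∀ i ∈ SF, f x i ≠ x i → (x i ^^ σ i) = true
        · exact ⟨x, hx, hdone⟩
        · push_neg at hdone
          obtain ⟨i, hiS, hfi, hxi⟩ := hdone
          have hxi' : (x i ^^ σ i) = false := by
            cases hv : (x i ^^ σ i)
            · rfl
            · exact absurd hv hxi
          have hxs : x i = σ i := bxor_eq_false.mp hxi'
          have hx' : Function.update x i (f x i) ∈ X := fact_step x hx i hfi
          have hfval : f x i = !(x i) := bnot_of_ne hfi
          have hlt : Wgt x < Wgt (Function.update x i (f x i)) := by
            apply Finset.card_lt_card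
            constructor
            · intro j hj
              obtain ⟨hjS, hjp⟩ := Finset.mem_filter.mp hj
              have hji : j ≠ i := by
                intro hji
                rw [hji] at hjp
                rw [hjp] at hxi'
                exact absurd hxi' (by decide)
              refine Finset.mem_filter.mpr ⟨hjS, ?_⟩
              rw [Function.update_of_ne hji]
              exact hjp
            · intro hsub
              have hi' : i ∈ SF.filter
                  (fun j => ((Function.update x i (f x i)) j ^^ σ j) = true) := by
                refine Finset.mem_filter.mpr ⟨hiS, ?_⟩
                rw [Function.update_self, hfval, hxs]
                exact bxor_eq_true.mpr rfl
              have hcontra := (Finset.mem_filter.mp (hsub hi')).2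
              rw [hxi'] at hcontra
              exact absurd hcontra (by decide)
          have hW'le : Wgt (Function.update x i (f x i)) ≤ SF.card := Finset.card_filter_le _ _
          exact IH _ hx' (by omega)
    have phase2 : ∀ k : ℕ, ∀ y ∈ X, Wgt y ≤ k →
        (∀ i ∈ SF, f y i ≠ y i → (y i ^^ σ i) = true) →
        ∃ z ∈ X, ∀ i ∈ SF, f z i = z i := by
      intro k
      induction k with
      | zero =>
        intro y hy hWy hinv
        refine ⟨y, hy, fun i hi => ?_⟩
        by_contra hfi
        have htw := hinv i hi hfi
        have hmem : i ∈ SF.filter (fun i => (y i ^^ σ i) = true) :=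
          Finset.mem_filter.mpr ⟨hi, htw⟩
        have hpos := Finset.card_pos.mpr ⟨i, hmem⟩
        have hWy' : (SF.filter (fun i => (y i ^^ σ i) = true)).card = Wgt y := rfl
        omega
      | succ k IH =>
        intro y hy hWy hinv
        by_cases hmv : ∃ i ∈ SF, f y i ≠ y i
        · obtain ⟨i, hiSF, hfi⟩ := hmv
          have hiS : S i := (Finset.mem_filter.mp hiSF).2
          have htw := hinv i hiSF hfi
          have hyi : y i = !(σ i) := bxor_eq_true.mp htw
          have hfyi : f y i = σ i := by
            rw [bnot_of_ne hfi, hyi, Bool.not_not]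
          set y' := Function.update y i (f y i) with hy'def
          have hy' : y' ∈ X := fact_step y hy i hfi
          have hy'eq : y' = Function.update y i (σ i) := by rw [hy'def, hfyi]
          have hyeq : Function.update y i (!(σ i)) = y := by
            rw [← hyi]; exact Function.update_eq_self i y
          have hy'i : y' i = σ i := by rw [hy'def, Function.update_self, hfyi]
          have hlt : Wgt y' < Wgt y := by
            apply Finset.card_lt_card
            constructor
            · intro j hj
              obtain ⟨hjS, hjp⟩ := Finset.mem_filter.mp hj
              have hji : j ≠ i := by
                intro hji
                rw [hji, hy'i, Bool.xor_self] at hjp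
                exact absurd hjp (by decide)
              refine Finset.mem_filter.mpr ⟨hjS, ?_⟩
              rw [hy'def, Function.update_of_ne hji] at hjp
              exact hjp
            · intro hsub
              have hi' : i ∈ SF.filter (fun j => (y j ^^ σ j) = true) :=
                Finset.mem_filter.mpr ⟨hiSF, htw⟩
              have hcontra := (Finset.mem_filter.mp (hsub hi')).2
              rw [hy'i, Bool.xor_self] at hcontra
              exact absurd hcontra (by decide)
          have hinv' : ∀ i' ∈ SF, f y' i' ≠ y' i' → (y' i' ^^ σ i') = true := by
            intro i' hi'SF hfi'
            have hi'S : S i' := (Finset.mem_filter.mp hi'SF).2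
            by_contra hcon
            have hcon' : y' i' = σ i' := by
              apply bxor_eq_false.mp
              cases hv : (y' i' ^^ σ i')
              · rfl
              · exact absurd hv hcon
            have hfv' : (f y' i' ^^ σ i') = true :=
              bxor_eq_true.mpr (by rw [bnot_of_ne hfi', hcon'])
            have hup : (f (Function.update y i (σ i)) i' ^^ σ i') = true := by
              rw [← hy'eq]; exact hfv'
            have hdown := hflip i i' hiS hi'S y hy hup
            rw [hyeq] at hdown
            rcases eq_or_ne i' i with rfl | hne
            · rw [hfyi, Bool.xor_self] at hdown
              exact absurd hdown (by decide)
            · have hy'i' : y' i' = y i' := by rw [hy'def, Function.update_of_ne hne]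
              by_cases hfy : f y i' = y i'
              · rw [hfy] at hdown
                have : y' i' = !(σ i') := by rw [hy'i']; exact bxor_eq_true.mp hdown
                rw [hcon'] at this
                exact absurd this (by cases hv : σ i' <;> decide)
              · have hyv : y i' = !(σ i') := bxor_eq_true.mp (hinv i' hi'SF hfy)
                have e2 : f y i' = !(σ i') := bxor_eq_true.mp hdown
                have e3 : f y i' = !(y i') := bnot_of_ne hfy
                rw [e3, hyv, Bool.not_not] at e2
                exact absurd e2 (by cases hv : σ i' <;> decide)
          exact IH y' hy' (by omega) hinv'
        · push_neg at hmv
          exact ⟨y, hy, fun i hi => not_not.mp (fun hc => hc (hmv i hi))⟩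
    have hW0 : Wgt x₀ ≤ SF.card := Finset.card_filter_le _ _
    obtain ⟨y1, hy1, hinv1⟩ := phase1 SF.card x₀ hx₀ (by omega)
    obtain ⟨z, hz, hzfix⟩ := phase2 (Wgt y1) y1 hy1 le_rfl hinv1
    -- the freeze set
    set Y : Finset (BState n) :=
      X.filter (fun y => ∀ i ∈ SF, y i = z i ∧ f y i = y i) with hY
    have hzY : z ∈ Y :=
      Finset.mem_filter.mpr ⟨hz, fun i hi => ⟨rfl, hzfix i hi⟩⟩
    have hYclosed : closedSet f Y := by
      intro y hy y' hstep
      obtain ⟨hyX, hyprop⟩ := Finset.mem_filter.mp hy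
      obtain ⟨k, hk, rfl⟩ := hstep
      have hkSF : k ∉ SF := fun hkSF => hk ((hyprop k hkSF).2)
      have hy'X : Function.update y k (f y k) ∈ X := fact_step y hyX k hk
      refine Finset.mem_filter.mpr ⟨hy'X, ?_⟩
      intro i hiSF
      have hiS : S i := (Finset.mem_filter.mp hiSF).2
      have hik : i ≠ k := fun hik => hkSF (hik ▸ hiSF)
      have he1 : Function.update y k (f y k) i = y i := Function.update_of_ne hik _ _
      refine ⟨by rw [he1]; exact (hyprop i hiSF).1, ?_⟩
      by_cases hfe : f (Function.update y k (f y k)) i = f y i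
      · rw [hfe, he1, (hyprop i hiSF).2]
      · exfalso
        have hTk : T k := fact_T y hyX k hk
        have hfval : f y k = !(y k) := bnot_of_ne hk
        have harc : ∃ s, rSgn f W s k i := by
          cases hyk : y k
          · -- y k = false, f y k = true
            have hfk : f y k = true := by rw [hfval, hyk]; rfl
            refine ⟨f (Function.update y k (f y k)) i, y, hyX, ?_, ?_⟩
            · rw [hfk]
            · have h5 : Function.update y k false = y := by
                rw [← hyk]; exact Function.update_eq_self k y
              rw [h5]; exact bnot_of_ne (Ne.symm hfe)
          · -- y k = true, f y k = false
            have hfk : f y k = false := by rw [hfval, hyk]; rfl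
            refine ⟨f y i, y, hyX, ?_, ?_⟩
            · have h5 : Function.update y k true = y := by
                rw [← hyk]; exact Function.update_eq_self k y
              rw [h5]
            · rw [← hfk]
              exact bnot_of_ne hfe
        obtain ⟨s, hs⟩ := harc
        have hkS : S k := Relation.ReflTransGen.head ⟨hTk, s, hs⟩ hiS
        exact hkSF (Finset.mem_filter.mpr ⟨Finset.mem_univ k, hkS⟩)
    have hYX := hmin Y (Finset.filter_subset _ _) ⟨z, hzY⟩ hYclosed
    -- contradiction: i₀ is both frozen and non-frozen
    have hi₀SF : i₀ ∈ SF :=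
      Finset.mem_filter.mpr ⟨Finset.mem_univ i₀, Relation.ReflTransGen.refl⟩
    obtain ⟨u, hu, w, hw, huw⟩ := hi₀T
    have hu' : u ∈ Y := hYX ▸ hu
    have hw' : w ∈ Y := hYX ▸ hw
    have h1 := ((Finset.mem_filter.mp hu').2 i₀ hi₀SF).1
    have h2 := ((Finset.mem_filter.mp hw').2 i₀ hi₀SF).1
    exact huw (h1.trans h2.symm)
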